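/- For every integer k ≥ 1 and every positive integer n, S_{2k}(n) = S_2(n) · Σ_{r=1}^{k} b_{k,r} · (S_1(n))^(r-1), as an identity of rational numbers, where b_{k,r} = Σ_{m=r}^{k} (3 · 2^r / (2m+1)!) · R(k,m) · Ps_m^(r). -/

import Mathlib

/-- `S k n = 1^k + 2^k + ⋯ + n^k`, the sum of the `k`-th powers of the first `n`
positive integers. -/
def S (k n : ℕ) : ℕ := ∑ i ∈ Finset.Icc 1 n, i ^ k

/-- `R k m = ∑_{j=0}^m (-1)^j C(2m, j) (m-j)^{2k}`, the sequence A304330. -/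
def R (k m : ℕ) : ℤ :=
  ∑ j ∈ Finset.range (m + 1),
    (-1 : ℤ) ^ j * ((2 * m).choose j : ℤ) * (((m - j) ^ (2 * k) : ℕ) : ℤ)

/-- The (signed) Legendre-Stirling number of the first kind `Ps_m^{(r)}`: the
coefficient of `x^r` in `∏_{j=0}^{m-1} (x − j(j+1))`. -/
noncomputable def Ps (m r : ℕ) : ℤ :=
  (∏ j ∈ Finset.range m, (Polynomial.X - Polynomial.C ((j * (j + 1) : ℕ) : ℤ))).coeff r

/-- The Faulhaber coefficients `b_{k,r}`. -/
noncomputable def b (k r : ℕ) : ℚ :=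
  ∑ m ∈ Finset.Icc r k,
    (3 * 2 ^ r / (Nat.factorial (2 * m + 1) : ℚ)) * (R k m : ℚ) * (Ps m r : ℚ)

open Finset


lemma choose_key (m j : ℕ) :
    ((2*m+2).choose (j+1)) * ((j+1) * (2*m+1-j)) = (2*m+2)*(2*m+1) * ((2*m).choose j) := by
  have h1 := Nat.add_one_mul_choose_eq (2*m+1) j
  have h2 := Nat.choose_mul_succ_eq (2*m) j
  -- h1 : (2m+2) * choose (2m+1) j = choose (2m+2) (j+1) * (j+1)
  -- h2 : choose (2m) j * (2m+1) = choose (2m+1) j * (2m+1-j)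
  calc ((2*m+2).choose (j+1)) * ((j+1) * (2*m+1-j))
      = ((2*m+2).choose (j+1) * (j+1)) * (2*m+1-j) := by ring
    _ = ((2*m+2) * ((2*m+1).choose j)) * (2*m+1-j) := by
        rw [← h1]
    _ = (2*m+2) * ((2*m+1).choose j * (2*m+1-j)) := by ring
    _ = (2*m+2)*(2*m+1) * ((2*m).choose j) := by rw [← h2]; ring

lemma R_succ (k m : ℕ) :
    R (k+1) (m+1) = (2*(m:ℤ)+2)*(2*(m:ℤ)+1) * R k m + ((m:ℤ)+1)^2 * R k (m+1) := by
  have key : R (k+1) (m+1) - ((m:ℤ)+1)^2 * R k (m+1)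
      = - ∑ j ∈ range (m+2), (-1:ℤ)^j * ((2*(m+1)).choose j : ℤ)
          * ((j:ℤ) * (2*(m:ℤ)+2-(j:ℤ))) * (((m+1-j) ^ (2*k) : ℕ) : ℤ) := by
    rw [R, R, Finset.mul_sum, ← Finset.sum_sub_distrib, ← Finset.sum_neg_distrib]
    apply Finset.sum_congr rfl
    intro j hj
    have hjm : j ≤ m + 1 := by simp at hj; omega
    have hc : ((m+1-j : ℕ) : ℤ) = (m:ℤ)+1-(j:ℤ) := by push_cast [hjm]; ring
    have hp : (((m+1-j) ^ (2*(k+1)) : ℕ) : ℤ) = ((m:ℤ)+1-(j:ℤ))^2 * (((m+1-j) ^ (2*k) : ℕ) : ℤ) := by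
      push_cast
      rw [hc]
      ring
    rw [hp]
    ring
  have key2 : ∑ j ∈ range (m+2), (-1:ℤ)^j * ((2*(m+1)).choose j : ℤ)
          * ((j:ℤ) * (2*(m:ℤ)+2-(j:ℤ))) * (((m+1-j) ^ (2*k) : ℕ) : ℤ)
      = - ((2*(m:ℤ)+2)*(2*(m:ℤ)+1) * R k m) := by
    rw [Finset.sum_range_succ']
    simp only [Nat.cast_zero, mul_zero, zero_mul, mul_zero, add_zero, zero_sub]
    rw [R, Finset.mul_sum, ← Finset.sum_neg_distrib]
    apply Finset.sum_congr rfl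
    intro j hj
    have hjm : j ≤ m := by simp at hj; omega
    have hcc : (((2*(m+1)).choose (j+1) : ℕ) : ℤ) * (((j:ℤ)+1) * (2*(m:ℤ)+1-(j:ℤ)))
        = ((2*(m:ℤ))+2)*(2*(m:ℤ)+1) * (((2*m).choose j : ℕ) : ℤ) := by
      have := choose_key m j
      have h2 : ((2*m+1-j : ℕ) : ℤ) = 2*(m:ℤ)+1-(j:ℤ) := by
        have : j ≤ 2*m+1 := by omega
        push_cast [this]; ring
      calc (((2*(m+1)).choose (j+1) : ℕ) : ℤ) * (((j:ℤ)+1) * (2*(m:ℤ)+1-(j:ℤ)))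
          = (((2*m+2).choose (j+1) * ((j+1) * (2*m+1-j)) : ℕ) : ℤ) := by
            push_cast [h2, show 2*(m+1) = 2*m+2 from by ring]
            ring
        _ = (((2*m+2)*(2*m+1) * ((2*m).choose j) : ℕ) : ℤ) := by rw [choose_key]
        _ = ((2*(m:ℤ))+2)*(2*(m:ℤ)+1) * (((2*m).choose j : ℕ) : ℤ) := by push_cast; ring
    have hm1 : m+1-(j+1) = m - j := by omega
    rw [hm1]
    simp only [Nat.cast_add, Nat.cast_one]
    linear_combination ((-1:ℤ)^(j+1) * (((m-j)^(2*k) : ℕ) : ℤ)) * hcc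
  rw [key2] at key
  linarith [key]

lemma alt_sum (n m : ℕ) :
    ∑ j ∈ range (m+1), (-1:ℤ)^j * ((n+1).choose j : ℤ) = (-1:ℤ)^m * (n.choose m : ℤ) := by
  induction m with
  | zero => simp
  | succ m ih =>
    rw [Finset.sum_range_succ, ih, Nat.choose_succ_succ (n) (m)]
    push_cast
    ring

lemma R_zero (m : ℕ) : R 0 (m+1) = (-1:ℤ)^(m+1) * ((2*m+1).choose (m+1) : ℤ) := by
  have : R 0 (m+1) = ∑ j ∈ range (m+2), (-1:ℤ)^j * (((2*m+1)+1).choose j : ℤ) := by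
    rw [R]
    apply Finset.sum_congr rfl
    intro j hj
    rw [mul_zero, pow_zero, Nat.cast_one, mul_one, show 2*(m+1) = (2*m+1)+1 from by ring]
  rw [this, alt_sum (2*m+1) (m+1)]

lemma R_one_vanish (d : ℕ) : R 1 (d+2) = 0 := by
  rw [show d+2 = (d+1)+1 from rfl, show (1:ℕ) = 0+1 from rfl, R_succ 0 (d+1), R_zero, R_zero]
  have h1 : (((2*d+3).choose (d+2) : ℤ)) * (d+2) = (2*d+3) * ((2*d+2).choose (d+1) : ℤ) := by
    have := Nat.add_one_mul_choose_eq (2*d+2) (d+1)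
    exact_mod_cast congrArg (Nat.cast : ℕ → ℤ) this.symm
  have h2 : (((2*d+2).choose (d+1) : ℤ)) * (d+1) = (2*d+2) * ((2*d+1).choose d : ℤ) := by
    have := Nat.add_one_mul_choose_eq (2*d+1) d
    exact_mod_cast congrArg (Nat.cast : ℕ → ℤ) this.symm
  have h3 : ((2*d+1).choose d : ℤ) = ((2*d+1).choose (d+1) : ℤ) := by
    have : (2*d+1).choose ((2*d+1) - (d+1)) = (2*d+1).choose (d+1) := Nat.choose_symm (by omega)
    rw [show (2*d+1) - (d+1) = d from by omega] at this
    exact_mod_cast congrArg (Nat.cast : ℕ → ℤ) this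
  have keyz : 2*((d:ℤ)+2)*(2*(d:ℤ)+3) * ((2*d+1).choose (d+1) : ℤ)
      = ((d:ℤ)+2)^2 * ((2*d+3).choose (d+2) : ℤ) := by
    have hd1 : ((d:ℤ)+1) ≠ 0 := by positivity
    apply mul_left_cancel₀ hd1
    linear_combination (-(((d:ℤ)+2)*((d:ℤ)+1))) * h1 - (((d:ℤ)+2)*(2*(d:ℤ)+3)) * h2
      - (((d:ℤ)+2)*(2*(d:ℤ)+3)*(2*(d:ℤ)+2)) * h3
  have e1 : ((-1:ℤ))^(d+1+1) = (-1)^d := by rw [pow_succ, pow_succ]; ring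
  have e2 : ((-1:ℤ))^(d+1) = -(-1)^d := by rw [pow_succ]; ring
  rw [show 2*(d+1)+1 = 2*d+3 from by ring, show 2*d+1+1 = 2*d+2 from by ring] at *
  push_cast
  rw [e1, e2]
  simp only [show d+1+1 = d+2 from rfl]
  linear_combination (-(-1:ℤ)^d) * keyz

lemma R_vanish : ∀ k m : ℕ, 1 ≤ k → k < m → R k m = 0 := by
  intro k
  induction k with
  | zero => omega
  | succ k ih =>
    intro m h1 h2
    rcases Nat.eq_zero_or_pos k with hk | hk
    · subst hk
      obtain ⟨d, rfl⟩ : ∃ d, m = d + 2 := ⟨m - 2, by omega⟩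
      exact R_one_vanish d
    · obtain ⟨m', rfl⟩ : ∃ m', m = m' + 1 := ⟨m - 1, by omega⟩
      rw [R_succ k m', ih m' hk (by omega), ih (m'+1) hk (by omega)]
      ring

lemma R_zero_right (k : ℕ) : R (k+1) 0 = 0 := by
  simp [R]

lemma R_one_one : R 1 1 = 1 := by
  rw [R]
  rw [Finset.sum_range_succ, Finset.sum_range_succ, Finset.sum_range_zero]
  norm_num

lemma coeff_rec (k m : ℕ) :
    2 * (R (k+2) (m+1) : ℚ) / ((2*(m+1)).factorial : ℚ)
      = 2 * (R (k+1) m : ℚ) / ((2*m).factorial : ℚ)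
        + ((m:ℚ)+1)^2 * (2 * (R (k+1) (m+1) : ℚ) / ((2*(m+1)).factorial : ℚ)) := by
  have hR : (R (k+2) (m+1) : ℚ)
      = (2*(m:ℚ)+2)*(2*(m:ℚ)+1) * (R (k+1) m : ℚ) + ((m:ℚ)+1)^2 * (R (k+1) (m+1) : ℚ) := by
    exact_mod_cast congrArg (Int.cast : ℤ → ℚ) (R_succ (k+1) m)
  have hf : ((2*(m+1)).factorial : ℚ) = (2*(m:ℚ)+2)*(2*(m:ℚ)+1)*((2*m).factorial : ℚ) := by
    rw [show 2*(m+1) = (2*m+1)+1 from by ring, Nat.factorial_succ, Nat.factorial_succ]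
    push_cast; ring
  have h0 : ((2*m).factorial : ℚ) ≠ 0 := by
    exact_mod_cast Nat.cast_ne_zero.mpr (Nat.factorial_ne_zero (2*m))
  have h1 : (2*(m:ℚ)+2) ≠ 0 := by positivity
  have h2 : (2*(m:ℚ)+1) ≠ 0 := by positivity
  rw [hf, hR]
  field_simp

lemma powsum : ∀ (k : ℕ) (x : ℚ), x^(2*(k+1)) =
    ∑ m ∈ range (k+1), (2 * (R (k+1) (m+1) : ℚ) / ((2*(m+1)).factorial : ℚ))
      * ∏ j ∈ range (m+1), (x^2 - (j:ℚ)^2) := by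
  intro k
  induction k with
  | zero =>
    intro x
    simp [R_one_one]

  | succ k ih =>
    intro x
    have hx : x^(2*(k+2)) = x^2 * x^(2*(k+1)) := by ring
    rw [hx, ih, Finset.mul_sum]
    have step : ∀ m ∈ range (k+1),
        x^2 * ((2 * (R (k+1) (m+1) : ℚ) / ((2*(m+1)).factorial : ℚ))
          * ∏ j ∈ range (m+1), (x^2 - (j:ℚ)^2))
        = (2 * (R (k+1) (m+1) : ℚ) / ((2*(m+1)).factorial : ℚ))
            * ∏ j ∈ range (m+2), (x^2 - (j:ℚ)^2)
          + ((m:ℚ)+1)^2 * ((2 * (R (k+1) (m+1) : ℚ) / ((2*(m+1)).factorial : ℚ))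
            * ∏ j ∈ range (m+1), (x^2 - (j:ℚ)^2)) := by
      intro m _
      rw [show m+2 = (m+1)+1 from rfl, Finset.prod_range_succ _ (m+1)]
      push_cast
      ring
    rw [Finset.sum_congr rfl step, Finset.sum_add_distrib]
    have A1 : ∑ m ∈ range (k+1), (2 * (R (k+1) (m+1) : ℚ) / ((2*(m+1)).factorial : ℚ))
          * ∏ j ∈ range (m+2), (x^2 - (j:ℚ)^2)
        = ∑ m ∈ range (k+2), (2 * (R (k+1) m : ℚ) / ((2*m).factorial : ℚ))
          * ∏ j ∈ range (m+1), (x^2 - (j:ℚ)^2) := by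
      rw [Finset.sum_range_succ' _ (k+1)]
      simp [R_zero_right]
    have A2 : ∑ m ∈ range (k+1), ((m:ℚ)+1)^2 * ((2 * (R (k+1) (m+1) : ℚ) / ((2*(m+1)).factorial : ℚ))
          * ∏ j ∈ range (m+1), (x^2 - (j:ℚ)^2))
        = ∑ m ∈ range (k+2), ((m:ℚ)+1)^2 * ((2 * (R (k+1) (m+1) : ℚ) / ((2*(m+1)).factorial : ℚ))
          * ∏ j ∈ range (m+1), (x^2 - (j:ℚ)^2)) := by
      rw [Finset.sum_range_succ _ (k+1)]
      rw [R_vanish (k+1) (k+2) (by omega) (by omega)]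
      norm_num
    rw [A1, A2, ← Finset.sum_add_distrib]
    apply Finset.sum_congr rfl
    intro m _
    rw [coeff_rec k m]
    ring

lemma shiftU (M : ℕ) (x : ℚ) :
    (∏ j ∈ range M, (x + j + 1)) * x = (∏ j ∈ range M, (x + j)) * (x + M) := by
  have h1 := Finset.prod_range_succ' (fun j => x + j) M
  have h2 := Finset.prod_range_succ (fun j => x + j) M
  rw [h2] at h1
  push_cast at h1
  rw [add_zero] at h1
  rw [show (∏ j ∈ range M, (x + (j:ℚ) + 1)) = ∏ j ∈ range M, (x + ((j:ℚ) + 1)) from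
    Finset.prod_congr rfl (fun j _ => by ring)]
  exact h1.symm

lemma shiftD (M : ℕ) (x : ℚ) :
    (∏ j ∈ range M, (x - 1 - j)) * x = (∏ j ∈ range M, (x - j)) * (x - M) := by
  have h1 := Finset.prod_range_succ' (fun j => x - j) M
  have h2 := Finset.prod_range_succ (fun j => x - j) M
  rw [h2] at h1
  push_cast at h1
  rw [sub_zero] at h1
  rw [show (∏ j ∈ range M, (x - 1 - (j:ℚ))) = ∏ j ∈ range M, (x - ((j:ℚ) + 1)) from
    Finset.prod_congr rfl (fun j _ => by ring)]
  exact h1.symm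

lemma telescope (M : ℕ) (x : ℚ) (hx : x ≠ 0) :
    (2*x+1) * ∏ j ∈ range M, ((x - j) * (x + j + 1))
      - (2*x-1) * ∏ j ∈ range M, ((x - 1 - j) * (x + j))
    = 2*(2*(M:ℚ)+1) * ∏ j ∈ range M, ((x - j) * (x + j)) := by
  apply mul_left_cancel₀ hx
  rw [Finset.prod_mul_distrib, Finset.prod_mul_distrib, Finset.prod_mul_distrib]
  have hU := shiftU M x
  have hD := shiftD M x
  set D := ∏ j ∈ range M, (x - (j:ℚ)) with hDdef
  set U := ∏ j ∈ range M, (x + (j:ℚ)) with hUdef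
  set E := ∏ j ∈ range M, (x + (j:ℚ) + 1) with hEdef
  set F := ∏ j ∈ range M, (x - 1 - (j:ℚ)) with hFdef
  linear_combination ((2*x+1)*D) * hU - ((2*x-1)*U) * hD

lemma Qsum (m : ℕ) : ∀ n : ℕ, ∑ i ∈ Icc 1 n, ∏ j ∈ range (m+1), ((i:ℚ)^2 - (j:ℚ)^2)
    = (2*(n:ℚ)+1)/(2*(2*(m:ℚ)+3))
      * ∏ j ∈ range (m+1), ((n:ℚ)*((n:ℚ)+1) - (j:ℚ)*((j:ℚ)+1)) := by
  intro n
  induction n with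
  | zero =>
    have h0 : ∏ j ∈ range (m+1), ((0:ℚ)*((0:ℚ)+1) - (j:ℚ)*((j:ℚ)+1)) = 0 := by
      apply Finset.prod_eq_zero (Finset.mem_range.mpr (Nat.succ_pos m))
      norm_num
    simp only [Nat.cast_zero, Finset.Icc_eq_empty_of_lt (by norm_num : (0:ℕ) < 1)]
    rw [Finset.sum_empty, h0, mul_zero]
  | succ n ih =>
    rw [Finset.sum_Icc_succ_top (by omega : 1 ≤ n+1), ih]
    have htel := telescope (m+1) ((n:ℚ)+1) (by positivity)
    push_cast at htel
    have hA : ∏ j ∈ range (m+1), (((n:ℚ)+1)*(((n:ℚ)+1)+1) - (j:ℚ)*((j:ℚ)+1))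
        = ∏ j ∈ range (m+1), ((((n:ℚ)+1) - j) * (((n:ℚ)+1) + j + 1)) :=
      Finset.prod_congr rfl fun j _ => by ring
    have hB : ∏ j ∈ range (m+1), ((n:ℚ)*((n:ℚ)+1) - (j:ℚ)*((j:ℚ)+1))
        = ∏ j ∈ range (m+1), (((n:ℚ) - j) * (((n:ℚ)+1) + j)) :=
      Finset.prod_congr rfl fun j _ => by ring
    have hB2 : ∏ j ∈ range (m+1), ((((n:ℚ)+1) - 1 - j) * (((n:ℚ)+1) + j))
        = ∏ j ∈ range (m+1), (((n:ℚ) - j) * (((n:ℚ)+1) + j)) :=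
      Finset.prod_congr rfl fun j _ => by ring
    rw [hB2] at htel
    have hP : ∏ j ∈ range (m+1), ((((n:ℚ)+1))^2 - (j:ℚ)^2)
        = ∏ j ∈ range (m+1), ((((n:ℚ)+1) - j) * (((n:ℚ)+1) + j)) :=
      Finset.prod_congr rfl fun j _ => by ring
    push_cast
    rw [hA, hB, hP]
    have hden : (2*(2*(m:ℚ)+3)) ≠ 0 := by positivity
    field_simp
    linear_combination -htel

open Polynomial in
lemma Ps_eval (m : ℕ) (y : ℚ) :
    ∏ j ∈ range m, (y - ((j:ℚ) * ((j:ℚ) + 1)))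
      = ∑ r ∈ range (m+1), (Ps m r : ℚ) * y^r := by
  set p : Polynomial ℤ := ∏ j ∈ range m, (X - C ((j * (j + 1) : ℕ) : ℤ)) with hp
  set q : Polynomial ℚ := p.map (Int.castRingHom ℚ) with hqdef
  have hq : q = ∏ j ∈ range m, (X - C (((j * (j + 1) : ℕ) : ℚ))) := by
    rw [hqdef, hp, Polynomial.map_prod]
    apply Finset.prod_congr rfl
    intro j _
    rw [Polynomial.map_sub, Polynomial.map_X, Polynomial.map_C]
    norm_num
  have hdeg : q.natDegree < m + 1 := by
    rw [hq]
    calc (∏ j ∈ range m, (X - C (((j * (j + 1) : ℕ) : ℚ)))).natDegree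
        ≤ ∑ j ∈ range m, (X - C (((j * (j + 1) : ℕ) : ℚ))).natDegree :=
          Polynomial.natDegree_prod_le _ _
      _ ≤ ∑ _j ∈ range m, 1 := by
          apply Finset.sum_le_sum
          intro j _
          rw [Polynomial.natDegree_X_sub_C]
      _ = m := by simp
      _ < m + 1 := Nat.lt_succ_self m
  have heval : q.eval y = ∏ j ∈ range m, (y - ((j:ℚ) * ((j:ℚ) + 1))) := by
    rw [hq, Polynomial.eval_prod]
    apply Finset.prod_congr rfl
    intro j _
    rw [Polynomial.eval_sub, Polynomial.eval_X, Polynomial.eval_C]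
    push_cast
    ring
  have hcoeff : ∀ r, q.coeff r = (Ps m r : ℚ) := by
    intro r
    rw [hqdef, Polynomial.coeff_map, Ps]
    rfl
  rw [← heval, Polynomial.eval_eq_sum_range' hdeg]
  apply Finset.sum_congr rfl
  intro r _
  rw [hcoeff]

open Polynomial in
lemma Ps_zero (m : ℕ) : Ps (m+1) 0 = 0 := by
  rw [Ps, Polynomial.coeff_zero_eq_eval_zero, Polynomial.eval_prod]
  apply Finset.prod_eq_zero (Finset.mem_range.mpr (Nat.succ_pos m))
  simp

lemma S_cast (k n : ℕ) : (S k n : ℚ) = ∑ i ∈ Icc 1 n, ((i:ℚ))^k := by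
  rw [S]
  push_cast
  rfl

lemma S1_eq (n : ℕ) : (S 1 n : ℚ) = (n:ℚ)*((n:ℚ)+1)/2 := by
  induction n with
  | zero => simp [S]
  | succ n ih =>
    rw [S_cast] at ih ⊢
    rw [Finset.sum_Icc_succ_top (by omega : 1 ≤ n+1), ih]
    push_cast
    ring

lemma S2_eq (n : ℕ) : (S 2 n : ℚ) = (n:ℚ)*((n:ℚ)+1)*(2*(n:ℚ)+1)/6 := by
  induction n with
  | zero => simp [S]
  | succ n ih =>
    rw [S_cast] at ih ⊢
    rw [Finset.sum_Icc_succ_top (by omega : 1 ≤ n+1), ih]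
    push_cast
    ring

lemma sum_Icc_shift {β : Type*} [AddCommMonoid β] (f : ℕ → β) (a b : ℕ) :
    ∑ i ∈ Icc (a+1) (b+1), f i = ∑ i ∈ Icc a b, f (i + 1) := by
  rw [← Finset.map_add_right_Icc a b 1, Finset.sum_map]
  rfl

theorem stmt_12 (k n : ℕ) (hk : 1 ≤ k) (hn : 1 ≤ n) :
    (S (2 * k) n : ℚ) =
      (S 2 n : ℚ) * ∑ r ∈ Finset.Icc 1 k, b k r * (S 1 n : ℚ) ^ (r - 1) := by
  obtain ⟨K, rfl⟩ : ∃ K, k = K + 1 := ⟨k - 1, by omega⟩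
  have hL : (S (2*(K+1)) n : ℚ)
      = ∑ m ∈ range (K+1), ∑ r ∈ range (m+1),
          (2 * (R (K+1) (m+1) : ℚ) / ((2*(m+1)).factorial : ℚ))
            * ((2*(n:ℚ)+1)/(2*(2*(m:ℚ)+3)))
            * (Ps (m+1) (r+1) : ℚ) * ((n:ℚ)*((n:ℚ)+1))^(r+1) := by
    rw [S_cast]
    calc ∑ i ∈ Icc 1 n, ((i:ℚ))^(2*(K+1))
        = ∑ i ∈ Icc 1 n, ∑ m ∈ range (K+1),
            (2 * (R (K+1) (m+1) : ℚ) / ((2*(m+1)).factorial : ℚ))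
              * ∏ j ∈ range (m+1), (((i:ℚ))^2 - (j:ℚ)^2) :=
          Finset.sum_congr rfl fun i _ => powsum K (i:ℚ)
      _ = ∑ m ∈ range (K+1), ∑ i ∈ Icc 1 n,
            (2 * (R (K+1) (m+1) : ℚ) / ((2*(m+1)).factorial : ℚ))
              * ∏ j ∈ range (m+1), (((i:ℚ))^2 - (j:ℚ)^2) := Finset.sum_comm
      _ = ∑ m ∈ range (K+1),
            (2 * (R (K+1) (m+1) : ℚ) / ((2*(m+1)).factorial : ℚ))
              * ∑ i ∈ Icc 1 n, ∏ j ∈ range (m+1), (((i:ℚ))^2 - (j:ℚ)^2) :=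
          Finset.sum_congr rfl fun m _ => (Finset.mul_sum _ _ _).symm
      _ = ∑ m ∈ range (K+1),
            (2 * (R (K+1) (m+1) : ℚ) / ((2*(m+1)).factorial : ℚ))
              * ((2*(n:ℚ)+1)/(2*(2*(m:ℚ)+3))
                * ∏ j ∈ range (m+1), ((n:ℚ)*((n:ℚ)+1) - (j:ℚ)*((j:ℚ)+1))) :=
          Finset.sum_congr rfl fun m _ => by rw [Qsum m n]
      _ = _ := by
          apply Finset.sum_congr rfl
          intro m _
          rw [Ps_eval (m+1) ((n:ℚ)*((n:ℚ)+1)), Finset.sum_range_succ' _ (m+1)]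
          rw [Ps_zero]
          push_cast
          simp only [zero_mul, add_zero]
          rw [Finset.mul_sum, Finset.mul_sum]
          apply Finset.sum_congr rfl
          intro r _
          ring
  rw [hL]
  rw [Finset.sum_comm' (t' := range (K+1)) (s' := fun r => Icc r K)
    (by intro m r; simp only [Finset.mem_range, Finset.mem_Icc]; omega)]
  rw [S2_eq, S1_eq, Finset.mul_sum]
  have houter : ∑ r ∈ Icc 1 (K+1),
        ((n:ℚ)*((n:ℚ)+1)*(2*(n:ℚ)+1)/6 * (b (K+1) r * ((n:ℚ)*((n:ℚ)+1)/2)^(r-1)))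
      = ∑ r ∈ range (K+1),
        ((n:ℚ)*((n:ℚ)+1)*(2*(n:ℚ)+1)/6 * (b (K+1) (r+1) * ((n:ℚ)*((n:ℚ)+1)/2)^r)) := by
    have h0 : Icc 1 (K+1) = Icc (0+1) (K+1) := by norm_num
    rw [h0, sum_Icc_shift _ 0 K,
      ← show range (K+1) = Icc 0 K from by
        rw [Nat.range_eq_Icc_zero_sub_one (K+1) (by omega)]
        norm_num]
    simp
  rw [houter]
  apply Finset.sum_congr rfl
  intro r _
  rw [b, sum_Icc_shift _ r K, Finset.sum_mul, Finset.mul_sum]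
  apply Finset.sum_congr rfl
  intro m hm
  have hfac2 : ((2*(m+1)+1).factorial : ℚ)
      = (2*((m:ℕ):ℚ)+3) * ((2*(m+1)).factorial : ℚ) := by
    rw [show 2*(m+1)+1 = (2*(m+1))+1 from rfl, Nat.factorial_succ]
    push_cast
    ring
  rw [hfac2]
  have hfac : ((2*(m+1)).factorial : ℚ) ≠ 0 :=
    Nat.cast_ne_zero.mpr (Nat.factorial_ne_zero _)
  have h3 : (2*((m:ℕ):ℚ)+3) ≠ 0 := by positivity
  have h2r : ((2:ℚ))^r ≠ 0 := by positivity
  rw [div_pow]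
  push_cast
  field_simp
  ring
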